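/- Let Z = {(0,1), (0,−1)} ∪ ⋃ₙ₌₁^∞ {(x, n·x) : x ∈ ℝ} ⊆ ℝ² with the subspace topology, Z₁ = ⋃ₙ₌₁^∞ {(x, n·x) : x ∈ ℝ}, and g : [0,1] → Z defined by g(x) = (0,1) for x ∈ [0,1/2) and g(x) = (0,−1) for x ∈ [1/2,1]. For each n ≥ 1 define gₙ : [0,1] → ℝ² by gₙ(x) = (1/n, 1) for x ∈ [0, (n−1)/(2n)], gₙ(x) = (−4x + (2n−1)/n, −4nx + 2n − 1) for x ∈ ((n−1)/(2n), 1/2], and gₙ(x) = (−1/n, −1) for x ∈ (1/2, 1]. Then each gₙ is continuous, takes all its values in Z₁, and the sequence (gₙ) converges to g pointwise on [0,1]. -/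

import Mathlib

open Set Filter Topology

/-- The union of the lines `y = n·x`, `n ≥ 1`. -/
def ZLines : Set (ℝ × ℝ) := {p : ℝ × ℝ | ∃ n : ℕ, 1 ≤ n ∧ p.2 = (n : ℝ) * p.1}

/-- The space `Z = {(0,1), (0,−1)} ∪ ⋃ₙ≥1 {(x, n·x) : x ∈ ℝ}`. -/
def ZSet : Set (ℝ × ℝ) := {((0 : ℝ), (1 : ℝ)), ((0 : ℝ), (-1 : ℝ))} ∪ ZLines

theorem stmt9 (g : ℝ → ℝ × ℝ) (gn : ℕ → ℝ → ℝ × ℝ)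
    (hg1 : ∀ x ∈ Set.Ico (0 : ℝ) (1 / 2), g x = ((0 : ℝ), (1 : ℝ)))
    (hg2 : ∀ x ∈ Set.Icc (1 / 2 : ℝ) 1, g x = ((0 : ℝ), (-1 : ℝ)))
    (hgn1 : ∀ n : ℕ, 1 ≤ n → ∀ x ∈ Set.Icc (0 : ℝ) (((n : ℝ) - 1) / (2 * n)),
      gn n x = ((1 / n : ℝ), (1 : ℝ)))
    (hgn2 : ∀ n : ℕ, 1 ≤ n → ∀ x ∈ Set.Ioc (((n : ℝ) - 1) / (2 * n)) (1 / 2 : ℝ),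
      gn n x = ((-4 * x + (2 * n - 1) / n : ℝ), (-4 * n * x + 2 * n - 1 : ℝ)))
    (hgn3 : ∀ n : ℕ, 1 ≤ n → ∀ x ∈ Set.Ioc (1 / 2 : ℝ) 1,
      gn n x = ((-1 / n : ℝ), (-1 : ℝ))) :
    (∀ n : ℕ, 1 ≤ n → ContinuousOn (gn n) (Set.Icc (0 : ℝ) 1)) ∧
    (∀ n : ℕ, 1 ≤ n → ∀ x ∈ Set.Icc (0 : ℝ) 1, gn n x ∈ ZLines) ∧
    (∀ x ∈ Set.Icc (0 : ℝ) 1, Tendsto (fun n : ℕ => gn n x) atTop (𝓝 (g x))) := by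
  refine ⟨?_, ?_, ?_⟩
  · -- continuity
    intro n hn
    have hn' : (1 : ℝ) ≤ (n : ℝ) := by exact_mod_cast hn
    have hn0 : (n : ℝ) ≠ 0 := by linarith
    set a : ℝ := ((n : ℝ) - 1) / (2 * n) with ha
    have ha2 : a ≤ 1 / 2 := by
      rw [ha, div_le_div_iff₀ (by linarith) (by norm_num)]
      linarith
    set c : ℝ → ℝ := fun x => max a (min x (1 / 2)) with hc
    have hcont : Continuous c := continuous_const.max (continuous_id.min continuous_const)
    set F : ℝ → ℝ × ℝ := fun x =>
      ((-4 * c x + (2 * n - 1) / n : ℝ), (-4 * n * c x + 2 * n - 1 : ℝ)) with hF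
    have hFc : Continuous F := by
      apply Continuous.prodMk
      · exact (continuous_const.mul hcont).add continuous_const
      · exact ((continuous_const.mul hcont).add continuous_const).sub continuous_const
    apply hFc.continuousOn.congr
    intro x hx
    rcases le_or_gt x a with h1 | h1
    · have hcx : c x = a := max_eq_left (le_trans (min_le_left _ _) h1)
      rw [hgn1 n hn x ⟨hx.1, h1⟩, hF]
      simp only [hcx]
      refine Prod.ext ?_ ?_ <;> simp <;> rw [ha] <;> field_simp <;> ring
    · rcases le_or_gt x (1 / 2) with h2 | h2
      · have hcx : c x = x := by
          rw [hc]; simp only [min_eq_left h2]; exact max_eq_right h1.le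
        rw [hgn2 n hn x ⟨h1, h2⟩, hF]
        simp [hcx]
      · have hcx : c x = 1 / 2 := by
          rw [hc]; simp only [min_eq_right h2.le]; exact max_eq_right ha2
        rw [hgn3 n hn x ⟨h2, hx.2⟩, hF]
        simp only [hcx]
        refine Prod.ext ?_ ?_ <;> simp <;> field_simp <;> ring
  · -- values in ZLines
    intro n hn x hx
    have hn' : (1 : ℝ) ≤ (n : ℝ) := by exact_mod_cast hn
    have hn0 : (n : ℝ) ≠ 0 := by linarith
    rcases le_or_gt x (((n : ℝ) - 1) / (2 * n)) with h1 | h1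
    · rw [hgn1 n hn x ⟨hx.1, h1⟩]
      exact ⟨n, hn, by field_simp⟩
    · rcases le_or_gt x (1 / 2) with h2 | h2
      · rw [hgn2 n hn x ⟨h1, h2⟩]
        exact ⟨n, hn, by field_simp; ring⟩
      · rw [hgn3 n hn x ⟨h2, hx.2⟩]
        exact ⟨n, hn, by field_simp⟩
  · -- pointwise convergence
    intro x hx
    rcases lt_or_ge x (1 / 2) with h | h
    · rw [hg1 x ⟨hx.1, h⟩]
      have hlim : Tendsto (fun n : ℕ => ((1 / n : ℝ), (1 : ℝ))) atTop
          (𝓝 ((0 : ℝ), (1 : ℝ))) :=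
        tendsto_one_div_atTop_nhds_zero_nat.prodMk_nhds tendsto_const_nhds
      refine Tendsto.congr' ?_ hlim
      obtain ⟨N, hN⟩ := exists_nat_ge (1 / (1 - 2 * x))
      filter_upwards [eventually_ge_atTop (max 1 N)] with n hn1
      have hn : 1 ≤ n := le_trans (le_max_left _ _) hn1
      have hNn : (N : ℝ) ≤ n := by exact_mod_cast le_trans (le_max_right _ _) hn1
      have hn' : (1 : ℝ) ≤ (n : ℝ) := by exact_mod_cast hn
      have hx2 : 0 < 1 - 2 * x := by linarith
      have hkey : 1 / (1 - 2 * x) ≤ (n : ℝ) := le_trans hN hNn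
      have hkey2 : 1 ≤ (n : ℝ) * (1 - 2 * x) := by
        rw [div_le_iff₀ hx2] at hkey; linarith
      have hxa : x ≤ ((n : ℝ) - 1) / (2 * n) := by
        rw [le_div_iff₀ (by linarith)]; nlinarith
      exact (hgn1 n hn x ⟨hx.1, hxa⟩).symm
    · rw [hg2 x ⟨h, hx.2⟩]
      have hlim : Tendsto (fun n : ℕ => ((-1 / n : ℝ), (-1 : ℝ))) atTop
          (𝓝 ((0 : ℝ), (-1 : ℝ))) := by
        refine Tendsto.prodMk_nhds ?_ tendsto_const_nhds
        have := (tendsto_one_div_atTop_nhds_zero_nat (𝕜 := ℝ)).neg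
        simpa [neg_div] using this
      refine Tendsto.congr' ?_ hlim
      filter_upwards [eventually_ge_atTop 1] with n hn
      have hn' : (1 : ℝ) ≤ (n : ℝ) := by exact_mod_cast hn
      have hn0 : (n : ℝ) ≠ 0 := by linarith
      rcases eq_or_lt_of_le h with heq | hlt
      · have ha : ((n : ℝ) - 1) / (2 * n) < x := by
          rw [← heq, div_lt_div_iff₀ (by linarith) (by norm_num)]; linarith
        rw [hgn2 n hn x ⟨ha, heq.ge⟩]
        refine (Prod.ext ?_ ?_).symm <;> simp <;> rw [← heq] <;> field_simp <;> ring
      · rw [hgn3 n hn x ⟨hlt, hx.2⟩]
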